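/- For every finite vertex set V and every contraction rate a ∈ [0,1), the asymptotic-period function (G,σ,T,x) ↦ P(F_{G,σ,T,a}, x), defined on the disjoint union over digraphs G=(V,A) and sign vectors σ ∈ {−1,1}^A of the cubes [0,1]^A × [0,1]^V (each cube carrying its Borel sigma-algebra) and taking values in ℕ ∪ {∞}, is a measurable function. -/

import Mathlib

open MeasureTheory Filter Topology
open scoped ENNReal

/-- The Heaviside function: `H(s) = 1` if `s ≥ 0`, and `0` otherwise. -/
noncomputable def heaviside (s : ℝ) : ℝ := if 0 ≤ s then 1 else 0

/-- Signs `{-1,1}` encoded by booleans: `true ↦ +1`, `false ↦ -1`. -/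
def signVal (b : Bool) : ℝ := if b then 1 else -1

variable {V : Type*} [Fintype V] [DecidableEq V]

/-- In-degree of a vertex `v` in the arrow set `A`: `Id(v) = #{u : (u,v) ∈ A}`. -/
def inDeg {V : Type*} [DecidableEq V] (A : Finset (V × V)) (v : V) : ℕ :=
  (A.filter fun e => e.2 = v).card

/-- The regulatory map `F_{G,σ,T,a}(x)_v = a x_v + (1-a) (1/Id(v)) Σ_{(u,v)∈A} H(σ_{(u,v)}(x_u - T_{(u,v)}))`
(the interaction term being `0` when `Id(v) = 0`, by the convention `(0 : ℝ)⁻¹ = 0`). -/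
noncomputable def regMap {V : Type*} [Fintype V] [DecidableEq V] (A : Finset (V × V))
    (σ : {e // e ∈ A} → Bool) (T : {e // e ∈ A} → ℝ) (a : ℝ) (x : V → ℝ) : V → ℝ := fun v =>
  a * x v + (1 - a) * ((inDeg A v : ℝ)⁻¹ *
    ∑ e ∈ A.attach.filter (fun e => e.val.2 = v),
      heaviside (signVal (σ e) * (x e.val.1 - T e)))

/-- The cube `[0,1]^V`. -/
def cubeV (V : Type*) [Fintype V] : Set (V → ℝ) := Set.pi Set.univ fun _ => Set.Icc (0:ℝ) 1

/-- The cube `[0,1]^A`. -/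
def cubeA {V : Type*} [Fintype V] [DecidableEq V] (A : Finset (V × V)) :
    Set ({e // e ∈ A} → ℝ) := Set.pi Set.univ fun _ => Set.Icc (0:ℝ) 1

/-- The discontinuity set `Δ_T = {x ∈ [0,1]^V : x_u = T_{(u,v)} for some (u,v) ∈ A}`. -/
def discSet {V : Type*} [Fintype V] [DecidableEq V] (A : Finset (V × V))
    (T : {e // e ∈ A} → ℝ) : Set (V → ℝ) :=
  {x | x ∈ cubeV V ∧ ∃ e : {e // e ∈ A}, x e.val.1 = T e}

/-- `inf_{t ≥ 0} d_max(F^t(x), Δ_T)` as an extended nonnegative real (the metric on `V → ℝ`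
is the sup metric `d_max`, and the distance to the empty set is `∞`). -/
noncomputable def orbitGap {V : Type*} [Fintype V] [DecidableEq V] (A : Finset (V × V))
    (σ : {e // e ∈ A} → Bool) (T : {e // e ∈ A} → ℝ) (a : ℝ) (x : V → ℝ) : ℝ≥0∞ :=
  ⨅ t : ℕ, EMetric.infEdist ((regMap A σ T a)^[t] x) (discSet A T)

/-- `asympPeriod A σ T a x τ` says that the asymptotic period `P(F_{G,σ,T,a}, x)` equals `τ`:
there is a periodic point `y ∈ [0,1]^V` of minimal period `τ ≥ 1` whose orbit attracts that
of `x` (distances are the sup metric `d_max`). -/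
def asympPeriod {V : Type*} [Fintype V] [DecidableEq V] (A : Finset (V × V))
    (σ : {e // e ∈ A} → Bool) (T : {e // e ∈ A} → ℝ) (a : ℝ) (x : V → ℝ) (τ : ℕ) : Prop :=
  1 ≤ τ ∧ ∃ y ∈ cubeV V, (regMap A σ T a)^[τ] y = y ∧
    (∀ t, 0 < t → t < τ → (regMap A σ T a)^[t] y ≠ y) ∧
    Filter.Tendsto (fun t => dist ((regMap A σ T a)^[t] x) ((regMap A σ T a)^[t] y))
      Filter.atTop (nhds 0)

open scoped Classical in
/-- The asymptotic period function, with values in `ℕ ∪ {∞}`. -/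
noncomputable def asympP {V : Type*} [Fintype V] [DecidableEq V] (A : Finset (V × V))
    (σ : {e // e ∈ A} → Bool) (T : {e // e ∈ A} → ℝ) (a : ℝ) (x : V → ℝ) : ℕ∞ :=
  if h : ∃ τ, asympPeriod A σ T a x τ then ((Nat.find h : ℕ) : ℕ∞) else ⊤

lemma measurable_from_prod_countable_left_aux {α β γ : Type*} [MeasurableSpace α]
    [MeasurableSpace β] [MeasurableSpace γ] [Countable α] [MeasurableSingletonClass α]
    {f : α × β → γ} (hf : ∀ x, Measurable fun y => f (x, y)) : Measurable f := by
  intro s hs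
  have h : f ⁻¹' s = ⋃ x : α, ({x} : Set α) ×ˢ ((fun y => f (x, y)) ⁻¹' s) := by
    ext ⟨x, y⟩
    simp
  rw [h]
  exact MeasurableSet.iUnion fun x => (measurableSet_singleton x).prod (hf x hs)

lemma measurable_of_sigma {ι : Type*} {β : ι → Type*} [∀ i, MeasurableSpace (β i)]
    {γ : Type*} [MeasurableSpace γ] {f : (Σ i, β i) → γ}
    (hf : ∀ i, Measurable fun b => f ⟨i, b⟩) : Measurable f := by
  intro s hs
  show MeasurableSet[Sigma.instMeasurableSpace] (f ⁻¹' s)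
  rw [Sigma.instMeasurableSpace, MeasurableSpace.measurableSet_iInf]
  intro i
  exact hf i hs

lemma heaviside_mem (s : ℝ) : heaviside s ∈ Set.Icc (0:ℝ) 1 := by
  unfold heaviside; split_ifs <;> norm_num

lemma measurable_heaviside : Measurable heaviside := by
  unfold heaviside
  exact Measurable.ite measurableSet_Ici measurable_const measurable_const

namespace AsympAux

variable {V : Type*} [Fintype V] [DecidableEq V] (A : Finset (V × V))
  (σ : {e // e ∈ A} → Bool) (a : ℝ)

lemma card_attach_filter (v : V) :
    (A.attach.filter fun e => e.val.2 = v).card = inDeg A v := by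
  rw [inDeg]
  apply Finset.card_bij (fun e _ => e.val)
  · intro e he
    simp only [Finset.mem_filter, Finset.mem_attach, true_and] at he
    simp [Finset.mem_filter, e.2, he]
  · intro e₁ _ e₂ _ h
    exact Subtype.ext h
  · intro e he
    simp only [Finset.mem_filter] at he
    exact ⟨⟨e, he.1⟩, by simp [he.2], rfl⟩

lemma regMap_mem_cube (ha0 : 0 ≤ a) (ha1 : a < 1) (T : {e // e ∈ A} → ℝ)
    {x : V → ℝ} (hx : x ∈ cubeV V) : regMap A σ T a x ∈ cubeV V := by
  intro v _
  have hxv := hx v (Set.mem_univ v)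
  simp only [Set.mem_Icc] at hxv ⊢
  set S := ∑ e ∈ A.attach.filter (fun e => e.val.2 = v),
      heaviside (signVal (σ e) * (x e.val.1 - T e)) with hS
  have hS0 : 0 ≤ S := Finset.sum_nonneg fun e _ => (heaviside_mem _).1
  have hScard : S ≤ (inDeg A v : ℝ) := by
    rw [← card_attach_filter A v]
    calc S ≤ ∑ _e ∈ A.attach.filter (fun e => e.val.2 = v), (1:ℝ) :=
          Finset.sum_le_sum fun e _ => (heaviside_mem _).2
      _ = _ := by simp
  have hr : (inDeg A v : ℝ)⁻¹ * S ∈ Set.Icc (0:ℝ) 1 := by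
    constructor
    · positivity
    · rcases Nat.eq_zero_or_pos (inDeg A v) with h | h
      · have : S = 0 := le_antisymm (by rw [h] at hScard; exact_mod_cast hScard) hS0
        simp [this]
      · have hd : (0:ℝ) < (inDeg A v : ℝ) := by exact_mod_cast h
        rw [inv_mul_le_iff₀ hd, mul_one]
        exact hScard
  rw [regMap]
  obtain ⟨hr0, hr1⟩ := hr
  constructor
  · nlinarith [hxv.1, hxv.2]
  · nlinarith [hxv.1, hxv.2]

variable {E : Type*}

lemma measurable_regMapPair :
    Measurable (fun q : ({e // e ∈ A} → ℝ) × (V → ℝ) => regMap A σ q.1 a q.2) := by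
  apply measurable_pi_lambda
  intro v
  have hx : ∀ u : V, Measurable fun q : ({e // e ∈ A} → ℝ) × (V → ℝ) => q.2 u :=
    fun u => (measurable_pi_apply u).comp measurable_snd
  have hT : ∀ e : {e // e ∈ A}, Measurable fun q : ({e // e ∈ A} → ℝ) × (V → ℝ) => q.1 e :=
    fun e => (measurable_pi_apply e).comp measurable_fst
  apply Measurable.add
  · exact measurable_const.mul (hx v)
  · apply Measurable.const_mul
    apply Measurable.const_mul
    apply Finset.measurable_sum
    intro e _
    exact measurable_heaviside.comp (measurable_const.mul ((hx e.val.1).sub (hT e)))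

/-- The orbit map. -/
noncomputable def Phi (p : ↥(cubeA A) × ↥(cubeV V)) (t : ℕ) : V → ℝ :=
  (regMap A σ p.1.val a)^[t] p.2.val

lemma measurable_Phi (t : ℕ) : Measurable (fun p => Phi A σ a p t) := by
  induction t with
  | zero => exact measurable_subtype_coe.comp measurable_snd
  | succ n ih =>
      have : (fun p => Phi A σ a p (n+1)) =
          (fun q : ({e // e ∈ A} → ℝ) × (V → ℝ) => regMap A σ q.1 a q.2) ∘
            fun p => (p.1.val, Phi A σ a p n) := by
        funext p
        simp only [Phi, Function.comp_apply, Function.iterate_succ_apply']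
      rw [this]
      exact (measurable_regMapPair A σ a).comp
        ((measurable_subtype_coe.comp measurable_fst).prodMk ih)

lemma Phi_mem (ha0 : 0 ≤ a) (ha1 : a < 1) (p : ↥(cubeA A) × ↥(cubeV V)) (t : ℕ) :
    Phi A σ a p t ∈ cubeV V := by
  induction t with
  | zero => exact p.2.2
  | succ n ih =>
      rw [Phi, Function.iterate_succ_apply']
      exact regMap_mem_cube A σ a ha0 ha1 _ ih

/-- Candidate limit along the arithmetic progression `t*τ + s`. -/
noncomputable def limFn (τ s : ℕ) (p : ↥(cubeA A) × ↥(cubeV V)) : V → ℝ :=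
  fun v => Filter.limsup (fun t => Phi A σ a p (t*τ+s) v) Filter.atTop

lemma measurable_limFn (τ s : ℕ) : Measurable (fun p => limFn A σ a τ s p) := by
  apply measurable_pi_lambda
  intro v
  exact Measurable.limsup fun t => (measurable_pi_apply v).comp (measurable_Phi A σ a (t*τ+s))

lemma limFn_eq_of_tendsto {τ s : ℕ} {p : ↥(cubeA A) × ↥(cubeV V)} {c : V → ℝ}
    (h : Tendsto (fun t => Phi A σ a p (t*τ+s)) atTop (𝓝 c)) : limFn A σ a τ s p = c := by
  funext v
  exact (tendsto_pi_nhds.mp h v).limsup_eq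

lemma asympPeriod_iff (ha0 : 0 ≤ a) (ha1 : a < 1) (p : ↥(cubeA A) × ↥(cubeV V)) (τ : ℕ) :
    asympPeriod A σ p.1.val a p.2.val τ ↔
      1 ≤ τ ∧ (∀ s, s < τ → ∃ c, Tendsto (fun t => Phi A σ a p (t*τ+s)) atTop (𝓝 c)) ∧
      (∀ s, s < τ → regMap A σ p.1.val a (limFn A σ a τ s p) = limFn A σ a τ ((s+1) % τ) p) ∧
      (∀ s, 0 < s → s < τ → limFn A σ a τ s p ≠ limFn A σ a τ 0 p) := by
  constructor
  · rintro ⟨hτ, y, hy, hyper, hymin, htd⟩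
    set F := regMap A σ p.1.val a with hF
    have key : ∀ s : ℕ, Tendsto (fun t => Phi A σ a p (t*τ+s)) atTop (𝓝 (F^[s] y)) := by
      intro s
      have horb : ∀ t : ℕ, F^[t*τ+s] y = F^[s] y := by
        intro t
        rw [add_comm, Function.iterate_add_apply, mul_comm, Function.iterate_mul,
          Function.iterate_fixed hyper]
      have hmono : Tendsto (fun t : ℕ => t*τ+s) atTop atTop := by
        apply tendsto_atTop_mono (fun t => ?_) tendsto_id
        exact le_trans (Nat.le_mul_of_pos_right t (by omega)) (Nat.le_add_right _ _)
      have hsub' : Tendsto (fun t => dist (F^[t*τ+s] p.2.val) (F^[t*τ+s] y)) atTop (𝓝 0) :=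
        htd.comp hmono
      simp only [horb] at hsub'
      rw [tendsto_iff_dist_tendsto_zero]
      exact hsub'
    have hL : ∀ s, limFn A σ a τ s p = F^[s] y := fun s => limFn_eq_of_tendsto A σ a (key s)
    refine ⟨hτ, fun s _ => ⟨_, key s⟩, fun s hs => ?_, fun s h0 hs => ?_⟩
    · show F (limFn A σ a τ s p) = limFn A σ a τ ((s+1) % τ) p
      rw [hL, hL, ← Function.iterate_succ_apply' F s y]
      by_cases h : s + 1 = τ
      · subst h
        rw [Nat.mod_self, Function.iterate_zero_apply]
        exact hyper
      · rw [Nat.mod_eq_of_lt (by omega)]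
    · rw [hL, hL, Function.iterate_zero_apply]
      exact hymin s h0 hs
  · rintro ⟨hτ, hconv, hper, hmin⟩
    set F := regMap A σ p.1.val a with hF
    have hτ0 : 0 < τ := hτ
    have hkey : ∀ s, s < τ →
        Tendsto (fun t => Phi A σ a p (t*τ+s)) atTop (𝓝 (limFn A σ a τ s p)) := by
      intro s hs; obtain ⟨c, hc⟩ := hconv s hs; rwa [limFn_eq_of_tendsto A σ a hc]
    set y := limFn A σ a τ 0 p with hy0
    have hycube : y ∈ cubeV V := by
      intro v _
      have h0 := tendsto_pi_nhds.mp (hkey 0 hτ0) v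
      apply isClosed_Icc.mem_of_tendsto h0
      filter_upwards with t
      exact Phi_mem A σ a ha0 ha1 p (t*τ+0) v (Set.mem_univ v)
    have hiter : ∀ s, s < τ → F^[s] y = limFn A σ a τ s p := by
      intro s
      induction s with
      | zero => intro _; rw [Function.iterate_zero_apply]
      | succ n ih =>
          intro h
          rw [Function.iterate_succ_apply', ih (by omega)]
          have h2 := hper n (by omega)
          rw [Nat.mod_eq_of_lt h] at h2
          exact h2
    have hτfix : F^[τ] y = y := by
      have h1 : τ - 1 < τ := by omega
      have h2 := hper (τ-1) h1
      rw [Nat.sub_add_cancel hτ, Nat.mod_self] at h2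
      calc F^[τ] y = F (F^[τ-1] y) := by
            rw [← Function.iterate_succ_apply' F (τ-1) y]
            congr 1
            omega
        _ = y := by rw [hiter _ h1, hy0]; exact h2
    have horb : ∀ t, F^[t] y = limFn A σ a τ (t % τ) p := by
      intro t
      conv_lhs => rw [show t = t % τ + t/τ*τ from (Nat.mod_add_div' t τ).symm]
      rw [Function.iterate_add_apply, mul_comm (t/τ) τ, Function.iterate_mul,
        Function.iterate_fixed hτfix]
      exact hiter _ (Nat.mod_lt _ hτ0)
    refine ⟨hτ, y, hycube, hτfix, ?_, ?_⟩
    · intro t h0 hlt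
      rw [horb t, Nat.mod_eq_of_lt hlt]
      exact hmin t h0 hlt
    · show Tendsto (fun t => dist (F^[t] p.2.val) (F^[t] y)) atTop (𝓝 0)
      rw [Metric.tendsto_atTop]
      intro ε hε
      have hN : ∀ s, ∃ N, ∀ t, t ≥ N → s < τ →
          dist (Phi A σ a p (t*τ+s)) (limFn A σ a τ s p) < ε := by
        intro s
        by_cases hs : s < τ
        · obtain ⟨N, hN⟩ := Metric.tendsto_atTop.mp (hkey s hs) ε hε
          exact ⟨N, fun t ht _ => hN t ht⟩
        · exact ⟨0, fun t _ hs' => absurd hs' hs⟩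
      choose N hNs using hN
      set M := (Finset.range τ).sup N with hM
      refine ⟨(M+1)*τ, fun n hn => ?_⟩
      have hsn : n % τ < τ := Nat.mod_lt _ hτ0
      have hqn : N (n % τ) ≤ n / τ := by
        have h1 : N (n % τ) ≤ M := Finset.le_sup (Finset.mem_range.mpr hsn)
        have h2 : M + 1 ≤ n / τ := (Nat.le_div_iff_mul_le hτ0).mpr hn
        omega
      have hd := hNs (n % τ) (n / τ) hqn hsn
      rw [horb n, Real.dist_0_eq_abs, abs_of_nonneg dist_nonneg]
      calc dist (F^[n] p.2.val) (limFn A σ a τ (n % τ) p)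
          = dist (Phi A σ a p (n/τ*τ + n%τ)) (limFn A σ a τ (n % τ) p) := by
            rw [Nat.div_add_mod' n τ]; rfl
        _ < ε := hd

lemma measurableSet_perSet (ha0 : 0 ≤ a) (ha1 : a < 1) (τ : ℕ) :
    MeasurableSet {p : ↥(cubeA A) × ↥(cubeV V) | asympPeriod A σ p.1.val a p.2.val τ} := by
  have hrw : {p : ↥(cubeA A) × ↥(cubeV V) | asympPeriod A σ p.1.val a p.2.val τ} =
      {p : ↥(cubeA A) × ↥(cubeV V) | 1 ≤ τ} ∩
      (({p | ∀ s, s < τ → ∃ c, Tendsto (fun t => Phi A σ a p (t*τ+s)) atTop (𝓝 c)}) ∩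
        (({p | ∀ s, s < τ →
            regMap A σ p.1.val a (limFn A σ a τ s p) = limFn A σ a τ ((s+1)%τ) p}) ∩
         {p | ∀ s, 0 < s → s < τ → limFn A σ a τ s p ≠ limFn A σ a τ 0 p})) := by
    ext p
    simp only [Set.mem_setOf_eq, Set.mem_inter_iff, asympPeriod_iff A σ a ha0 ha1 p τ]
  rw [hrw]
  refine MeasurableSet.inter (MeasurableSet.const _)
    (MeasurableSet.inter ?_ (MeasurableSet.inter ?_ ?_))
  · have : {p : ↥(cubeA A) × ↥(cubeV V) |
        ∀ s, s < τ → ∃ c, Tendsto (fun t => Phi A σ a p (t*τ+s)) atTop (𝓝 c)} =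
        ⋂ s, ⋂ (_ : s < τ),
          {p | ∃ c, Tendsto (fun t => Phi A σ a p (t*τ+s)) atTop (𝓝 c)} := by
      ext p; simp
    rw [this]
    exact MeasurableSet.iInter fun s => MeasurableSet.iInter fun _ =>
      measurableSet_exists_tendsto fun t => measurable_Phi A σ a (t*τ+s)
  · have : {p : ↥(cubeA A) × ↥(cubeV V) | ∀ s, s < τ →
        regMap A σ p.1.val a (limFn A σ a τ s p) = limFn A σ a τ ((s+1)%τ) p} =
        ⋂ s, ⋂ (_ : s < τ),
          {p | regMap A σ p.1.val a (limFn A σ a τ s p) = limFn A σ a τ ((s+1)%τ) p} := by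
      ext p; simp
    rw [this]
    refine MeasurableSet.iInter fun s => MeasurableSet.iInter fun _ => ?_
    have hf : Measurable fun p : ↥(cubeA A) × ↥(cubeV V) =>
        regMap A σ p.1.val a (limFn A σ a τ s p) :=
      (measurable_regMapPair A σ a).comp
        ((measurable_subtype_coe.comp measurable_fst).prodMk (measurable_limFn A σ a τ s))
    exact measurableSet_eq_fun hf (measurable_limFn A σ a τ ((s+1)%τ))
  · have : {p : ↥(cubeA A) × ↥(cubeV V) | ∀ s, 0 < s → s < τ →
        limFn A σ a τ s p ≠ limFn A σ a τ 0 p} =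
        ⋂ s, ⋂ (_ : 0 < s), ⋂ (_ : s < τ),
          {p | limFn A σ a τ s p = limFn A σ a τ 0 p}ᶜ := by
      ext p; simp
    rw [this]
    exact MeasurableSet.iInter fun s => MeasurableSet.iInter fun _ =>
      MeasurableSet.iInter fun _ =>
        (measurableSet_eq_fun (measurable_limFn A σ a τ s)
          (measurable_limFn A σ a τ 0)).compl

lemma measurable_asympP_core (ha0 : 0 ≤ a) (ha1 : a < 1) :
    Measurable fun d : ↥(cubeA A) × ↥(cubeV V) => asympP A σ d.1.val a d.2.val := by
  classical
  rw [ENat.measurable_iff]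
  intro n
  have hset : (fun d : ↥(cubeA A) × ↥(cubeV V) => asympP A σ d.1.val a d.2.val) ⁻¹' {(n:ℕ∞)} =
      {d : ↥(cubeA A) × ↥(cubeV V) | asympPeriod A σ d.1.val a d.2.val n} ∩
        ⋂ m, ⋂ (_ : m < n),
          {d : ↥(cubeA A) × ↥(cubeV V) | asympPeriod A σ d.1.val a d.2.val m}ᶜ := by
    ext d
    simp only [Set.mem_preimage, Set.mem_singleton_iff, Set.mem_inter_iff, Set.mem_iInter,
      Set.mem_setOf_eq, Set.mem_compl_iff]
    constructor
    · intro h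
      by_cases hex : ∃ τ, asympPeriod A σ d.1.val a d.2.val τ
      · rw [asympP, dif_pos hex, Nat.cast_inj] at h
        rw [Nat.find_eq_iff] at h
        exact ⟨h.1, fun m hm => h.2 m hm⟩
      · rw [asympP, dif_neg hex] at h
        simp at h
    · rintro ⟨h1, h2⟩
      have hex : ∃ τ, asympPeriod A σ d.1.val a d.2.val τ := ⟨n, h1⟩
      rw [asympP, dif_pos hex, Nat.cast_inj, Nat.find_eq_iff]
      exact ⟨h1, fun m hm => h2 m hm⟩
  rw [hset]
  exact (measurableSet_perSet A σ a ha0 ha1 n).inter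
    (MeasurableSet.iInter fun m => MeasurableSet.iInter fun _ =>
      (measurableSet_perSet A σ a ha0 ha1 m).compl)

end AsympAux

set_option maxHeartbeats 800000 in
/-- For every finite vertex set `V` and every `a ∈ [0,1)`, the asymptotic
period function `(G,σ,T,x) ↦ P(F_{G,σ,T,a}, x)`, defined on the disjoint union, over digraphs
`G = (V,A)` and sign vectors `σ ∈ {-1,1}^A`, of the cubes `[0,1]^A × [0,1]^V` (each with its
Borel σ-algebra), with values in `ℕ ∪ {∞}`, is measurable. -/
theorem asympP_measurable (V : Type*) [Fintype V] [DecidableEq V]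
    (a : ℝ) (ha0 : 0 ≤ a) (ha1 : a < 1) :
    Measurable (fun p : (Σ A : Finset (V × V),
          ({e // e ∈ A} → Bool) × (↥(cubeA A) × ↥(cubeV V))) =>
        asympP p.1 p.2.1 p.2.2.1.val a p.2.2.2.val) := by
  apply measurable_of_sigma
  intro A
  have hcore : ∀ σ : ({e // e ∈ A} → Bool),
      Measurable fun d : ↥(cubeA A) × ↥(cubeV V) => asympP A σ d.1.val a d.2.val :=
    fun σ => AsympAux.measurable_asympP_core A σ a ha0 ha1
  show Measurable (fun b : ({e // e ∈ A} → Bool) × (↥(cubeA A) × ↥(cubeV V)) =>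
      asympP A b.1 b.2.1.val a b.2.2.val)
  exact measurable_from_prod_countable_left_aux fun σ => hcore σ
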